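/- Let θ be an infinite cardinal, P a θ-directed poset, and P* a subposet of P that is θ₀-cofinal for every θ₀ < θ. Let I be a partial order such that for every i ∈ I, the set {j ∈ I : j < i} has cardinality less than θ, and let ⟨p_i : i ∈ I⟩ be a monotone diagram in P. Then there exists a cofinal subset I₀ ⊆ I and a monotone diagram ⟨q_i : i ∈ I₀⟩ in P* such that p_i ≤ q_i for all i ∈ I₀. -/

import Mathlib

open Cardinal

universe u

/-- A preorder is `θ`-directed if every subset of cardinality `< θ` has an upper bound. -/
def IsCardDirected (θ : Cardinal.{u}) (J : Type u) [Preorder J] : Prop :=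
  ∀ S : Set J, #S < θ → ∃ b, ∀ s ∈ S, s ≤ b

/-- `θ`-cofinality of a subposet `e : Q → P`. -/
def IsThetaCofinal (θ : Cardinal.{u}) {P Q : Type u} [PartialOrder P] [PartialOrder Q]
    (e : Q → P) : Prop :=
  ∀ (p : P) (ι : Type u), #ι = θ → ∀ f : ι → Q,
    (∀ i, e (f i) ≤ p) → ∃ q : Q, p ≤ e q ∧ ∀ i, f i ≤ q

/-- Given a `θ`-directed poset `P`, a `(<θ)`-cofinal subposet `P*`, a poset `I` all of whose
strict initial segments have size `< θ`, and a monotone diagram `⟨p_i : i ∈ I⟩` in `P`, there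
is a cofinal `I₀ ⊆ I` and a monotone diagram `⟨q_i : i ∈ I₀⟩` in `P*` with `p_i ≤ q_i`. -/
theorem stmt7 (θ : Cardinal.{u}) (hθ : ℵ₀ ≤ θ) {P Q : Type u}
    [PartialOrder P] [PartialOrder Q]
    (e : Q → P) (hinj : Function.Injective e) (hmono : ∀ x y : Q, x ≤ y → e x ≤ e y)
    (hdir : IsCardDirected θ P)
    (hcof : ∀ θ₀ < θ, IsThetaCofinal θ₀ e)
    {I : Type u} [PartialOrder I]
    (hI : ∀ i : I, #{j : I // j < i} < θ)
    (p : I → P) (hp : Monotone p) :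
    ∃ (I₀ : Set I) (q : I₀ → Q),
      (∀ i : I, ∃ j ∈ I₀, i ≤ j) ∧
      (∀ i j : I₀, (i : I) ≤ (j : I) → q i ≤ q j) ∧
      (∀ i : I₀, p i ≤ e (q i)) := by
  classical
  let r : I → I → Prop := WellOrderingRel
  have hwo : IsWellOrder I r := WellOrderingRel.isWellOrder
  have hwf : WellFounded r := hwo.toIsWellFounded.wf
  set I₀ : Set I := {i | ∀ j, r j i → ¬ (i ≤ j)} with hI₀def
  -- cofinality of I₀
  have hcofinal : ∀ i : I, ∃ j ∈ I₀, i ≤ j := by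
    intro i
    induction i using hwf.induction with
    | _ i ih =>
      by_cases h : i ∈ I₀
      · exact ⟨i, h, le_refl i⟩
      · simp only [hI₀def, Set.mem_setOf_eq, not_forall, not_not] at h
        obtain ⟨j, hji, hij⟩ := h
        obtain ⟨k, hk, hjk⟩ := ih j hji
        exact ⟨k, hk, hij.trans hjk⟩
  -- well-foundedness of < on I₀
  have hsub : ∀ a b : I₀, (a : I) < (b : I) → r (a : I) (b : I) := by
    intro a b hab
    rcases trichotomous_of r (a : I) (b : I) with h | h | h
    · exact h
    · exact absurd (Subtype.ext h) (by rintro rfl; exact lt_irrefl _ hab)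
    · exact absurd hab.le (a.2 _ h)
  have hwfsub : WellFounded (fun a b : I₀ => (a : I) < (b : I)) :=
    Subrelation.wf (fun {a b} h => hsub a b h) (InvImage.wf Subtype.val hwf)
  -- key existence step
  have key : ∀ i : I₀, ∀ g : ∀ j : I₀, (j : I) < (i : I) → Q,
      ∃ q : Q, p i ≤ e q ∧ ∀ (j : I₀) (h : (j : I) < (i : I)), g j h ≤ q := by
    intro i g
    let ι := {j : I₀ // (j : I) < (i : I)}
    have hι : #ι < θ := by
      refine lt_of_le_of_lt (Cardinal.mk_le_of_injective
        (f := fun j : ι => (⟨(j.1 : I), j.2⟩ : {j : I // j < (i : I)})) ?_) (hI i)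
      intro a b hab
      simp only [Subtype.mk.injEq] at hab
      exact Subtype.ext (Subtype.ext hab)
    have hS : #(insert (p i) (Set.range fun j : ι => e (g j.1 j.2)) : Set P) < θ := by
      refine lt_of_le_of_lt ((Cardinal.mk_insert_le).trans
        (add_le_add Cardinal.mk_range_le le_rfl)) ?_
      exact Cardinal.add_lt_of_lt hθ hι (lt_of_lt_of_le Cardinal.one_lt_aleph0 hθ)
    obtain ⟨b, hb⟩ := hdir _ hS
    obtain ⟨q, hq1, hq2⟩ := hcof (#ι) hι b ι rfl (fun j => g j.1 j.2)
      (fun j => hb _ (Set.mem_insert_of_mem _ ⟨j, rfl⟩))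
    exact ⟨q, (hb _ (Set.mem_insert _ _)).trans hq1, fun j h => hq2 ⟨j, h⟩⟩
  let F : ∀ i : I₀, (∀ j : I₀, (j : I) < (i : I) → Q) → Q :=
    fun i g => Classical.choose (key i g)
  let q : I₀ → Q := hwfsub.fix F
  have hqeq : ∀ i : I₀, q i = F i (fun j _ => q j) := fun i => hwfsub.fix_eq F i
  have hspec : ∀ i : I₀, p i ≤ e (q i) ∧ ∀ (j : I₀) (h : (j : I) < (i : I)), q j ≤ q i := by
    intro i
    have h2 : q i = Classical.choose (key i (fun j _ => q j)) := hwfsub.fix_eq F i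
    rw [h2]
    exact Classical.choose_spec (key i (fun j _ => q j))
  refine ⟨I₀, q, hcofinal, ?_, fun i => (hspec i).1⟩
  intro i j hij
  rcases eq_or_lt_of_le hij with h | h
  · rw [Subtype.ext h]
  · exact (hspec j).2 i h
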